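/- The two 5-element semigroups M = M({1}; 2,2; I) and M¹ = M({1}; 2,2; I¹) of 2×2 Rees matrices over the trivial group (with sandwich matrices the identity I and I¹ = e₁₁ + e₁₂ + e₂₂ respectively) are not isomorphic as semigroups, even though both contracted semigroup algebras Q₀M and Q₀M¹ are isomorphic to M₂(Q). -/

import Mathlib

/-- The carrier of the two `2 × 2` Rees matrix semigroups over the trivial group:
the four elementary matrices `e₁₁, e₁₂, e₂₁, e₂₂` together with the zero `θ`. -/
inductive RS : Type
  | e11 | e12 | e21 | e22 | th
  deriving DecidableEq

instance : Fintype RS :=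
  ⟨{RS.e11, RS.e12, RS.e21, RS.e22, RS.th}, fun x => by cases x <;> decide⟩

/-- Multiplication of `M = M({1}; 2, 2; I)` (sandwich matrix the identity):
`e_{ij}·e_{kl} = e_{il}` if `j = k`, and `θ` otherwise. -/
def mulM : RS → RS → RS
  | .e11, .e11 => .e11
  | .e11, .e12 => .e12
  | .e12, .e21 => .e11
  | .e12, .e22 => .e12
  | .e21, .e11 => .e21
  | .e21, .e12 => .e22
  | .e22, .e21 => .e21
  | .e22, .e22 => .e22
  | _, _ => .th

/-- Multiplication of `M¹ = M({1}; 2, 2; I¹)` with sandwich matrix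
`I¹ = e₁₁ + e₁₂ + e₂₂`: here `e_{i1}·e_{kl} = e_{il}` for any `k`, and
`e_{i2}·e_{kl} = e_{il}` iff `k = 2`, else `θ`. -/
def mulM1 : RS → RS → RS
  | .e11, .e11 => .e11
  | .e11, .e12 => .e12
  | .e11, .e21 => .e11
  | .e11, .e22 => .e12
  | .e12, .e21 => .e11
  | .e12, .e22 => .e12
  | .e21, .e11 => .e21
  | .e21, .e12 => .e22
  | .e21, .e21 => .e21
  | .e21, .e22 => .e22
  | .e22, .e21 => .e21
  | .e22, .e22 => .e22
  | _, _ => .th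


def FM : RS → Matrix (Fin 2) (Fin 2) ℚ
  | .e11 => !![1,0;0,0]
  | .e12 => !![0,1;0,0]
  | .e21 => !![0,0;1,0]
  | .e22 => !![0,0;0,1]
  | .th => 0

def FM1 : RS → Matrix (Fin 2) (Fin 2) ℚ
  | .e11 => !![1,0;0,0]
  | .e12 => !![0,1;0,0]
  | .e21 => !![1,0;1,0]
  | .e22 => !![0,1;0,1]
  | .th => 0

lemma li4 (A B C D : Matrix (Fin 2) (Fin 2) ℚ)
    (h : ∀ g : Fin 4 → ℚ, g 0 • A + g 1 • B + g 2 • C + g 3 • D = 0 → ∀ i, g i = 0) :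
    LinearIndependent ℚ ![A, B, C, D] := by
  rw [Fintype.linearIndependent_iff]
  intro g hg
  apply h g
  simpa [Fin.sum_univ_four] using hg

/-- The two five-element Rees matrix semigroups `M` and `M¹` are semigroups with
zero `θ`, they are not isomorphic as semigroups, and yet both contracted semigroup
algebras `ℚ₀M` and `ℚ₀M¹` are isomorphic to `M₂(ℚ)` (witnessed by multiplicative
maps into `M₂(ℚ)` killing `θ` whose nonzero values form a basis). -/
theorem stmt19 :
    (∀ a b c : RS, mulM (mulM a b) c = mulM a (mulM b c)) ∧
    (∀ a b c : RS, mulM1 (mulM1 a b) c = mulM1 a (mulM1 b c)) ∧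
    (∀ a : RS, mulM RS.th a = RS.th ∧ mulM a RS.th = RS.th) ∧
    (∀ a : RS, mulM1 RS.th a = RS.th ∧ mulM1 a RS.th = RS.th) ∧
    (¬ ∃ f : RS → RS, Function.Bijective f ∧
        ∀ a b : RS, f (mulM a b) = mulM1 (f a) (f b)) ∧
    (∃ F : RS → Matrix (Fin 2) (Fin 2) ℚ, F RS.th = 0 ∧
        (∀ a b : RS, F (mulM a b) = F a * F b) ∧
        LinearIndependent ℚ ![F RS.e11, F RS.e12, F RS.e21, F RS.e22]) ∧
    (∃ F : RS → Matrix (Fin 2) (Fin 2) ℚ, F RS.th = 0 ∧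
        (∀ a b : RS, F (mulM1 a b) = F a * F b) ∧
        LinearIndependent ℚ ![F RS.e11, F RS.e12, F RS.e21, F RS.e22]) := by

  refine ⟨by decide, by decide, by decide, by decide, ?_, ?_, ?_⟩
  · rintro ⟨f, hbij, hhom⟩
    have key : ∀ x : RS, mulM1 (f x) (f x) = f x → mulM x x = x := by
      intro x hx
      exact hbij.injective ((hhom x x).trans hx)
    have idem : ∀ x : RS, mulM x x = x → x = RS.e11 ∨ x = RS.e22 ∨ x = RS.th := by
      decide
    obtain ⟨a, ha⟩ := hbij.surjective RS.e11
    obtain ⟨b, hb⟩ := hbij.surjective RS.e21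
    obtain ⟨c, hc⟩ := hbij.surjective RS.e22
    obtain ⟨d, hd⟩ := hbij.surjective RS.th
    have ia := idem a (key a (by rw [ha]; rfl))
    have ib := idem b (key b (by rw [hb]; rfl))
    have ic := idem c (key c (by rw [hc]; rfl))
    have id' := idem d (key d (by rw [hd]; rfl))
    have hab : a ≠ b := by intro h; rw [h, hb] at ha; cases ha
    have hac : a ≠ c := by intro h; rw [h, hc] at ha; cases ha
    have had : a ≠ d := by intro h; rw [h, hd] at ha; cases ha
    have hbc : b ≠ c := by intro h; rw [h, hc] at hb; cases hb
    have hbd : b ≠ d := by intro h; rw [h, hd] at hb; cases hb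
    have hcd : c ≠ d := by intro h; rw [h, hd] at hc; cases hc
    rcases ia with h1|h1|h1 <;> rcases ib with h2|h2|h2 <;>
      rcases ic with h3|h3|h3 <;> rcases id' with h4|h4|h4 <;> simp_all
  · refine ⟨FM, rfl, ?_, ?_⟩
    · intro a b
      cases a <;> cases b <;> simp [mulM, FM, Matrix.mul_fin_two] <;> (ext i j; fin_cases i <;> fin_cases j <;> simp)
    · apply li4
      intro g hg
      have h00 := congrFun (congrFun hg 0) 0
      have h01 := congrFun (congrFun hg 0) 1
      have h10 := congrFun (congrFun hg 1) 0
      have h11 := congrFun (congrFun hg 1) 1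
      simp [FM] at h00 h01 h10 h11
      intro i
      fin_cases i <;> simp_all
  · refine ⟨FM1, rfl, ?_, ?_⟩
    · intro a b
      cases a <;> cases b <;> simp [mulM1, FM1, Matrix.mul_fin_two] <;> (ext i j; fin_cases i <;> fin_cases j <;> simp)
    · apply li4
      intro g hg
      have h00 := congrFun (congrFun hg 0) 0
      have h01 := congrFun (congrFun hg 0) 1
      have h10 := congrFun (congrFun hg 1) 0
      have h11 := congrFun (congrFun hg 1) 1
      simp [FM1] at h00 h01 h10 h11
      intro i
      fin_cases i <;> simp_all
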